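/- (Conformality for holomorphic solutions of the ℂP² model.) Let Ω ⊆ ℂ be open and let W₁, W₂ : Ω → ℂ be holomorphic. Define A := 1 + |W₁|² + |W₂|², f := (1, W₁, W₂) : Ω → ℂ³, P := 1₃ − (f·fᴴ)/A, and K := [∂̄P, P]. Then at every point of Ω: tr(Kᴴ·Kᴴ) = 0 and tr(Kᴴ·K) = (|∂W₁|² + |∂W₂|² + |W₁·∂W₂ − W₂·∂W₁|²)/A². Hence the immersion X with ∂X = iKᴴ, ∂̄X = iK induced by a holomorphic solution of the ℂP² sigma model is conformal, with conformal factor g_{ξ̄ξ} = (|∂W₁|² + |∂W₂|² + |W₁∂W₂ − W₂∂W₁|²)/A². -/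

import Mathlib

open Matrix Complex

attribute [local instance] Matrix.frobeniusNormedAddCommGroup Matrix.frobeniusNormedSpace

/-- The Wirtinger derivative `∂F(ξ) = (1/2)(DF(ξ)(1) − i·DF(ξ)(i))`. -/
noncomputable def wd {E : Type*} [NormedAddCommGroup E] [NormedSpace ℂ E]
    (F : ℂ → E) (ξ : ℂ) : E :=
  (2 : ℂ)⁻¹ • (fderiv ℝ F ξ 1 - Complex.I • fderiv ℝ F ξ Complex.I)

/-- The Wirtinger derivative `∂̄F(ξ) = (1/2)(DF(ξ)(1) + i·DF(ξ)(i))`. -/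
noncomputable def wdbar {E : Type*} [NormedAddCommGroup E] [NormedSpace ℂ E]
    (F : ℂ → E) (ξ : ℂ) : E :=
  (2 : ℂ)⁻¹ • (fderiv ℝ F ξ 1 + Complex.I • fderiv ℝ F ξ Complex.I)

noncomputable def wclm (u v : ℂ) : ℂ →L[ℝ] ℂ :=
  u • (ContinuousLinearMap.id ℝ ℂ) + v • (Complex.conjCLE.toContinuousLinearMap)

lemma wclm_apply (u v w : ℂ) : wclm u v w = u * w + v * (starRingEnd ℂ) w := by
  simp [wclm, smul_eq_mul]

def HasWAt (F : ℂ → ℂ) (ξ u v : ℂ) : Prop := HasFDerivAt F (wclm u v) ξ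

lemma HasWAt.wd_eq {F : ℂ → ℂ} {ξ u v : ℂ} (h : HasWAt F ξ u v) : wd F ξ = u := by
  unfold wd
  rw [HasFDerivAt.fderiv h]
  simp only [wclm_apply, Complex.conj_I, RingHom.map_one, smul_eq_mul]
  linear_combination (2:ℂ)⁻¹ * (v - u) * Complex.I_sq

lemma HasWAt.wdbar_eq {F : ℂ → ℂ} {ξ u v : ℂ} (h : HasWAt F ξ u v) : wdbar F ξ = v := by
  unfold wdbar
  rw [HasFDerivAt.fderiv h]
  simp only [wclm_apply, Complex.conj_I, RingHom.map_one, smul_eq_mul]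
  linear_combination (2:ℂ)⁻¹ * (u - v) * Complex.I_sq

lemma HasWAt.congr_uv {F : ℂ → ℂ} {ξ u v u' v' : ℂ} (h : HasWAt F ξ u v)
    (hu : u = u') (hv : v = v') : HasWAt F ξ u' v' := hu ▸ hv ▸ h

lemma hasWAt_const (ξ c : ℂ) : HasWAt (fun _ => c) ξ 0 0 := by
  have e : wclm 0 0 = 0 := by ext w; simp [wclm_apply]
  unfold HasWAt
  rw [e]
  exact hasFDerivAt_const c ξ

lemma HasWAt.wadd {F G : ℂ → ℂ} {ξ u₁ v₁ u₂ v₂ : ℂ}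
    (h₁ : HasWAt F ξ u₁ v₁) (h₂ : HasWAt G ξ u₂ v₂) :
    HasWAt (fun z => F z + G z) ξ (u₁ + u₂) (v₁ + v₂) := by
  have h := HasFDerivAt.add h₁ h₂
  have e : wclm (u₁ + u₂) (v₁ + v₂) = wclm u₁ v₁ + wclm u₂ v₂ := by
    ext w; simp [wclm_apply]; ring
  unfold HasWAt; rw [e]; exact h

lemma HasWAt.wmul {F G : ℂ → ℂ} {ξ u₁ v₁ u₂ v₂ : ℂ}
    (h₁ : HasWAt F ξ u₁ v₁) (h₂ : HasWAt G ξ u₂ v₂) :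
    HasWAt (fun z => F z * G z) ξ (F ξ * u₂ + G ξ * u₁) (F ξ * v₂ + G ξ * v₁) := by
  have h := HasFDerivAt.mul h₁ h₂
  have e : wclm (F ξ * u₂ + G ξ * u₁) (F ξ * v₂ + G ξ * v₁)
      = F ξ • wclm u₂ v₂ + G ξ • wclm u₁ v₁ := by
    ext w; simp [wclm_apply, smul_eq_mul]; ring
  unfold HasWAt; rw [e]; exact h

lemma HasWAt.ofHolo {F : ℂ → ℂ} {ξ p : ℂ} (h : HasDerivAt F p ξ) : HasWAt F ξ p 0 := by
  have h1 := (h.hasFDerivAt).restrictScalars ℝ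
  have e : wclm p 0 = (ContinuousLinearMap.smulRight (1 : ℂ →L[ℂ] ℂ) p).restrictScalars ℝ := by
    ext w
    simp [wclm_apply, smul_eq_mul]
    ring
  unfold HasWAt; rw [e]; exact h1

lemma HasWAt.ofConjHolo {F : ℂ → ℂ} {ξ p : ℂ} (h : HasDerivAt F p ξ) :
    HasWAt (fun z => (starRingEnd ℂ) (F z)) ξ 0 ((starRingEnd ℂ) p) := by
  have h1 := (h.hasFDerivAt).restrictScalars ℝ
  have h2 := (Complex.conjCLE.toContinuousLinearMap.hasFDerivAt (x := F ξ)).comp ξ h1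
  have e : wclm 0 ((starRingEnd ℂ) p)
      = (Complex.conjCLE.toContinuousLinearMap).comp
          ((ContinuousLinearMap.smulRight (1 : ℂ →L[ℂ] ℂ) p).restrictScalars ℝ) := by
    ext w
    simp [wclm_apply, smul_eq_mul, Complex.conjCLE_apply]
    ring
  unfold HasWAt; rw [e]
  exact h2

lemma HasWAt.winv {F : ℂ → ℂ} {ξ u v : ℂ} (h : HasWAt F ξ u v) (h0 : F ξ ≠ 0) :
    HasWAt (fun z => (F z)⁻¹) ξ (-u / F ξ ^ 2) (-v / F ξ ^ 2) := by
  have hi := ((hasDerivAt_inv h0).hasFDerivAt).restrictScalars ℝ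
  have h2 := hi.comp ξ h
  have e : wclm (-u / F ξ ^ 2) (-v / F ξ ^ 2)
      = (ContinuousLinearMap.restrictScalars ℝ
          (ContinuousLinearMap.smulRight (1 : ℂ →L[ℂ] ℂ) (-(F ξ ^ 2)⁻¹))).comp (wclm u v) := by
    ext w
    simp [wclm_apply, smul_eq_mul]
    field_simp
    ring
  unfold HasWAt; rw [e]
  exact h2

abbrev Mat3 := Matrix (Fin 3) (Fin 3) ℂ

noncomputable def wclmM (M₁ M₂ : Mat3) : ℂ →L[ℝ] Mat3 :=
  (ContinuousLinearMap.id ℝ ℂ).smulRight M₁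
    + (Complex.conjCLE.toContinuousLinearMap).smulRight M₂

lemma wclmM_apply (M₁ M₂ : Mat3) (w : ℂ) :
    wclmM M₁ M₂ w = w • M₁ + (starRingEnd ℂ) w • M₂ := by
  simp [wclmM, Complex.conjCLE_apply]

def HasWAtM (F : ℂ → Mat3) (ξ : ℂ) (M₁ M₂ : Mat3) : Prop := HasFDerivAt F (wclmM M₁ M₂) ξ

lemma HasWAtM.wdbar_eq {F : ℂ → Mat3} {ξ : ℂ} {M₁ M₂ : Mat3} (h : HasWAtM F ξ M₁ M₂) :
    wdbar F ξ = M₂ := by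
  unfold wdbar
  erw [HasFDerivAt.fderiv h, wclmM_apply, wclmM_apply]
  simp only [wclmM_apply, Complex.conj_I, one_smul, RingHom.map_one, smul_add, smul_smul]
  match_scalars <;>
    first
      | linear_combination ((2:ℂ)⁻¹) * Complex.I_sq
      | linear_combination (-(2:ℂ)⁻¹) * Complex.I_sq

lemma hasWAtM_const (ξ : ℂ) (C : Mat3) : HasWAtM (fun _ => C) ξ 0 0 := by
  have e : wclmM 0 0 = 0 := by ext w : 1; simp [wclmM_apply]
  unfold HasWAtM; rw [e]; exact hasFDerivAt_const C ξ

lemma HasWAtM.wadd {F G : ℂ → Mat3} {ξ : ℂ} {M₁ M₂ N₁ N₂ : Mat3}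
    (h₁ : HasWAtM F ξ M₁ M₂) (h₂ : HasWAtM G ξ N₁ N₂) :
    HasWAtM (fun z => F z + G z) ξ (M₁ + N₁) (M₂ + N₂) := by
  have h := HasFDerivAt.add h₁ h₂
  have e : wclmM (M₁ + N₁) (M₂ + N₂) = wclmM M₁ M₂ + wclmM N₁ N₂ := by
    ext w : 1; simp [wclmM_apply]; module
  unfold HasWAtM; rw [e]; exact h

lemma HasWAtM.wsub {F G : ℂ → Mat3} {ξ : ℂ} {M₁ M₂ N₁ N₂ : Mat3}
    (h₁ : HasWAtM F ξ M₁ M₂) (h₂ : HasWAtM G ξ N₁ N₂) :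
    HasWAtM (fun z => F z - G z) ξ (M₁ - N₁) (M₂ - N₂) := by
  have h := HasFDerivAt.sub h₁ h₂
  have e : wclmM (M₁ - N₁) (M₂ - N₂) = wclmM M₁ M₂ - wclmM N₁ N₂ := by
    ext w : 1; simp [wclmM_apply]; module
  unfold HasWAtM; rw [e]; exact h

lemma HasWAt.smulC {g : ℂ → ℂ} {ξ u v : ℂ} (h : HasWAt g ξ u v) (C : Mat3) :
    HasWAtM (fun z => g z • C) ξ (u • C) (v • C) := by
  have h2 := HasFDerivAt.smul_const (h : HasFDerivAt g (wclm u v) ξ) C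
  have e : wclmM (u • C) (v • C) = (wclm u v).smulRight C := by
    ext w : 1
    simp [wclmM_apply, wclm_apply, smul_smul, add_smul, mul_comm]
  unfold HasWAtM; rw [e]; exact h2
lemma HasWAt.conj_comp {g : ℂ → ℂ} {ξ d : ℂ} (hg : HasWAt g ξ d 0) :
    HasWAt (fun z => (starRingEnd ℂ) (g z)) ξ 0 ((starRingEnd ℂ) d) := by
  have h2 := (Complex.conjCLE.toContinuousLinearMap.hasFDerivAt (x := g ξ)).comp ξ
    (hg : HasFDerivAt g (wclm d 0) ξ)
  have e : wclm 0 ((starRingEnd ℂ) d)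
      = (Complex.conjCLE.toContinuousLinearMap).comp (wclm d 0) := by
    ext w
    simp [wclm_apply, Complex.conjCLE_apply]
  unfold HasWAt; rw [e]
  exact h2

lemma HasWAt.entryP {Bf gi gj : ℂ → ℂ} {ξ uB vB di dj : ℂ}
    (hB : HasWAt Bf ξ uB vB) (h0 : Bf ξ ≠ 0)
    (hgi : HasWAt gi ξ di 0) (hgj : HasWAt gj ξ dj 0) :
    HasWAt (fun z => (Bf z)⁻¹ * (gi z * (starRingEnd ℂ) (gj z))) ξ
      (di * (starRingEnd ℂ) (gj ξ) / Bf ξ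
        - uB * (gi ξ * (starRingEnd ℂ) (gj ξ)) / Bf ξ ^ 2)
      (gi ξ * (starRingEnd ℂ) dj / Bf ξ
        - vB * (gi ξ * (starRingEnd ℂ) (gj ξ)) / Bf ξ ^ 2) := by
  have h := (hB.winv h0).wmul (hgi.wmul hgj.conj_comp)
  exact h.congr_uv (by field_simp [h0]; ring) (by field_simp [h0]; ring)

lemma HasWAtM.congr_fun {F G : ℂ → Mat3} {ξ : ℂ} {M₁ M₂ : Mat3} (h : HasWAtM F ξ M₁ M₂)
    (he : ∀ z, G z = F z) : HasWAtM G ξ M₁ M₂ :=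
  HasFDerivAt.congr_of_eventuallyEq h (Filter.Eventually.of_forall he)

noncomputable def Bfn (W₁ W₂ : ℂ → ℂ) (z : ℂ) : ℂ :=
  1 + W₁ z * (starRingEnd ℂ) (W₁ z) + W₂ z * (starRingEnd ℂ) (W₂ z)

noncomputable def Qm (a b p q B : ℂ) : Mat3 :=
  Matrix.of fun i j =>
    (a * (starRingEnd ℂ) p + b * (starRingEnd ℂ) q)
        * (![1, a, b] i * (starRingEnd ℂ) (![1, a, b] j)) / B ^ 2
      - ![1, a, b] i * (starRingEnd ℂ) (![0, p, q] j) / B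

set_option maxHeartbeats 2000000 in
lemma wdbar_P (W₁ W₂ : ℂ → ℂ) (ξ p q : ℂ)
    (hd1 : HasDerivAt W₁ p ξ) (hd2 : HasDerivAt W₂ q ξ)
    (h0 : Bfn W₁ W₂ ξ ≠ 0) :
    wdbar (fun z => (1 : Mat3) - (Bfn W₁ W₂ z)⁻¹ •
        Matrix.vecMulVec ![1, W₁ z, W₂ z] (star ![1, W₁ z, W₂ z])) ξ
      = Qm (W₁ ξ) (W₂ ξ) p q (Bfn W₁ W₂ ξ) := by
  have hone : HasWAt (fun _ : ℂ => (1:ℂ)) ξ 0 0 := hasWAt_const ξ 1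
  have hw1 : HasWAt W₁ ξ p 0 := HasWAt.ofHolo hd1
  have hw2 : HasWAt W₂ ξ q 0 := HasWAt.ofHolo hd2
  have hc1 := HasWAt.ofConjHolo hd1
  have hc2 := HasWAt.ofConjHolo hd2
  have hB : HasWAt (Bfn W₁ W₂) ξ
      (p * (starRingEnd ℂ) (W₁ ξ) + q * (starRingEnd ℂ) (W₂ ξ))
      (W₁ ξ * (starRingEnd ℂ) p + W₂ ξ * (starRingEnd ℂ) q) :=
    (((hasWAt_const ξ 1).wadd (hw1.wmul hc1)).wadd (hw2.wmul hc2)).congr_uv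
      (by ring) (by ring)
  have he00 := hB.entryP h0 hone hone
  have he01 := hB.entryP h0 hone hw1
  have he02 := hB.entryP h0 hone hw2
  have he10 := hB.entryP h0 hw1 hone
  have he11 := hB.entryP h0 hw1 hw1
  have he12 := hB.entryP h0 hw1 hw2
  have he20 := hB.entryP h0 hw2 hone
  have he21 := hB.entryP h0 hw2 hw1
  have he22 := hB.entryP h0 hw2 hw2
  have hM := (hasWAtM_const ξ 1).wsub
    ((((((((((he00.smulC (Matrix.single 0 0 1)).wadd
      (he01.smulC (Matrix.single 0 1 1))).wadd
      (he02.smulC (Matrix.single 0 2 1))).wadd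
      (he10.smulC (Matrix.single 1 0 1))).wadd
      (he11.smulC (Matrix.single 1 1 1))).wadd
      (he12.smulC (Matrix.single 1 2 1))).wadd
      (he20.smulC (Matrix.single 2 0 1))).wadd
      (he21.smulC (Matrix.single 2 1 1))).wadd
      (he22.smulC (Matrix.single 2 2 1))))
  have hM2 := HasWAtM.congr_fun
    (G := fun z => (1 : Mat3) - (Bfn W₁ W₂ z)⁻¹ •
        Matrix.vecMulVec ![1, W₁ z, W₂ z] (star ![1, W₁ z, W₂ z])) hM
    (by
      intro z
      ext i j
      fin_cases i <;> fin_cases j <;>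
        simp [Matrix.vecMulVec_apply, Matrix.single, Matrix.one_apply,
          -Matrix.cons_vecMulVec, -Matrix.vecMulVec_cons] <;> ring)
  rw [hM2.wdbar_eq]
  ext i j
  fin_cases i <;> fin_cases j <;>
    simp [Qm, Matrix.single, Matrix.one_apply] <;> ring
lemma vmv_mul (u v x y : Fin 3 → ℂ) :
    Matrix.vecMulVec u v * Matrix.vecMulVec x y = (v ⬝ᵥ x) • Matrix.vecMulVec u y := by
  ext i j
  simp [Matrix.mul_apply, Matrix.vecMulVec_apply, dotProduct, Fin.sum_univ_three]
  ring

lemma vmv_ct (u v : Fin 3 → ℂ) :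
    (Matrix.vecMulVec u v)ᴴ = Matrix.vecMulVec (star v) (star u) := by
  ext i j
  simp [Matrix.conjTranspose_apply, Matrix.vecMulVec_apply, mul_comm]

lemma vmv_trace (u v : Fin 3 → ℂ) : (Matrix.vecMulVec u v).trace = v ⬝ᵥ u := by
  simp [Matrix.trace, Matrix.diag, Matrix.vecMulVec_apply, dotProduct, mul_comm]

noncomputable def wvf (a b p q B : ℂ) : Fin 3 → ℂ := fun j =>
  ((a * (starRingEnd ℂ) p + b * (starRingEnd ℂ) q) * (starRingEnd ℂ) (![1, a, b] j)
    - B * (starRingEnd ℂ) (![0, p, q] j)) / B ^ 2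

lemma aux_hQw (a b p q B : ℂ) (h0 : B ≠ 0) :
    Qm a b p q B = Matrix.vecMulVec ![1, a, b] (wvf a b p q B) := by
  ext i j
  simp [Qm, wvf, Matrix.vecMulVec_apply]
  field_simp

lemma aux_h1 (a b p q B : ℂ) (hB : B = 1 + a * (starRingEnd ℂ) a + b * (starRingEnd ℂ) b)
    (h0 : B ≠ 0) : wvf a b p q B ⬝ᵥ ![1, a, b] = 0 := by
  simp [wvf, dotProduct, Fin.sum_univ_three]
  field_simp
  rw [hB]
  ring

lemma aux_h2 (a b B : ℂ) (hB : B = 1 + a * (starRingEnd ℂ) a + b * (starRingEnd ℂ) b) :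
    star ![1, a, b] ⬝ᵥ ![1, a, b] = B := by
  simp [dotProduct, Fin.sum_univ_three, hB]
  ring

lemma aux_h3 (a b p q B : ℂ) (hB : B = 1 + a * (starRingEnd ℂ) a + b * (starRingEnd ℂ) b)
    (h0 : B ≠ 0) (hBr : (starRingEnd ℂ) B = B) :
    star ![1, a, b] ⬝ᵥ star (wvf a b p q B) = 0 := by
  simp [wvf, dotProduct, Fin.sum_univ_three, map_div₀, hBr]
  field_simp
  rw [hB]
  ring

set_option maxHeartbeats 2000000 in
lemma aux_h4 (a b p q B : ℂ) (hB : B = 1 + a * (starRingEnd ℂ) a + b * (starRingEnd ℂ) b)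
    (h0 : B ≠ 0) (hBr : (starRingEnd ℂ) B = B) :
    B * (wvf a b p q B ⬝ᵥ star (wvf a b p q B))
      = ((Complex.normSq p + Complex.normSq q
          + Complex.normSq (a * q - b * p) : ℝ) : ℂ) / B ^ 2 := by
  have hne2 : B ^ 2 ≠ 0 := pow_ne_zero _ h0
  have hne4 : B ^ 2 * B ^ 2 ≠ 0 := mul_ne_zero hne2 hne2
  have e1 : ((Complex.normSq p + Complex.normSq q
      + Complex.normSq (a * q - b * p) : ℝ) : ℂ)
      = p * (starRingEnd ℂ) p + q * (starRingEnd ℂ) q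
        + (a * q - b * p) * (starRingEnd ℂ) (a * q - b * p) := by
    push_cast
    rw [Complex.mul_conj, Complex.mul_conj, Complex.mul_conj]
  rw [e1]
  simp only [wvf, dotProduct, Fin.sum_univ_three, Matrix.cons_val_zero, Matrix.cons_val_one,
    Matrix.head_cons, Matrix.cons_val_two, Matrix.tail_cons, Pi.star_apply, Complex.star_def,
    map_div₀, map_sub, _root_.map_mul, map_add, _root_.map_one, map_zero, map_pow,
    Complex.conj_conj, hBr, div_mul_div_comm, ← add_div]
  rw [← mul_div_assoc, div_eq_div_iff hne4 hne2]
  rw [hB]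
  ring
set_option maxHeartbeats 1000000 in
theorem conformality_holomorphic_CP2 (Ω : Set ℂ) (hΩ : IsOpen Ω)
    (W₁ W₂ : ℂ → ℂ) (hW₁ : DifferentiableOn ℂ W₁ Ω) (hW₂ : DifferentiableOn ℂ W₂ Ω)
    (A : ℂ → ℝ) (hA : A = fun ξ => 1 + Complex.normSq (W₁ ξ) + Complex.normSq (W₂ ξ))
    (f : ℂ → Fin 3 → ℂ) (hf : f = fun ξ => ![1, W₁ ξ, W₂ ξ])
    (P : ℂ → Matrix (Fin 3) (Fin 3) ℂ)
    (hP : P = fun ξ => 1 - ((A ξ : ℂ))⁻¹ • Matrix.vecMulVec (f ξ) (star (f ξ)))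
    (K : ℂ → Matrix (Fin 3) (Fin 3) ℂ)
    (hK : K = fun ξ => wdbar P ξ * P ξ - P ξ * wdbar P ξ) :
    ∀ ξ ∈ Ω,
      ((K ξ)ᴴ * (K ξ)ᴴ).trace = 0 ∧
      ((K ξ)ᴴ * K ξ).trace
        = ((Complex.normSq (wd W₁ ξ) + Complex.normSq (wd W₂ ξ)
            + Complex.normSq (W₁ ξ * wd W₂ ξ - W₂ ξ * wd W₁ ξ) : ℝ) : ℂ)
          / ((A ξ : ℂ)) ^ 2 := by
  intro ξ hξ
  have hmem := hΩ.mem_nhds hξ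
  have hd1 : HasDerivAt W₁ (deriv W₁ ξ) ξ := (hW₁.differentiableAt hmem).hasDerivAt
  have hd2 : HasDerivAt W₂ (deriv W₂ ξ) ξ := (hW₂.differentiableAt hmem).hasDerivAt
  set p := deriv W₁ ξ with hp
  set q := deriv W₂ ξ with hq
  have hwd1 : wd W₁ ξ = p := (HasWAt.ofHolo hd1).wd_eq
  have hwd2 : wd W₂ ξ = q := (HasWAt.ofHolo hd2).wd_eq
  have hApos : (0:ℝ) < A ξ := by
    simp only [hA]
    have := Complex.normSq_nonneg (W₁ ξ)
    have := Complex.normSq_nonneg (W₂ ξ)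
    linarith
  have hAB : ∀ z, ((A z : ℝ) : ℂ) = Bfn W₁ W₂ z := by
    intro z
    simp only [hA, Bfn]
    push_cast
    rw [Complex.mul_conj, Complex.mul_conj]
  have h0 : Bfn W₁ W₂ ξ ≠ 0 := by
    rw [← hAB]
    exact Complex.ofReal_ne_zero.mpr (ne_of_gt hApos)
  have hBval : Bfn W₁ W₂ ξ
      = 1 + W₁ ξ * (starRingEnd ℂ) (W₁ ξ) + W₂ ξ * (starRingEnd ℂ) (W₂ ξ) := rfl
  have hBr : (starRingEnd ℂ) (Bfn W₁ W₂ ξ) = Bfn W₁ W₂ ξ := by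
    rw [← hAB ξ]
    exact Complex.conj_ofReal _
  have hPfun : P = fun z => (1 : Mat3) - (Bfn W₁ W₂ z)⁻¹ •
      Matrix.vecMulVec ![1, W₁ z, W₂ z] (star ![1, W₁ z, W₂ z]) := by
    funext z
    simp only [hP, hf]
    rw [hAB z]
  have hQ : wdbar P ξ = Qm (W₁ ξ) (W₂ ξ) p q (Bfn W₁ W₂ ξ) := by
    rw [hPfun]
    exact wdbar_P W₁ W₂ ξ p q hd1 hd2 h0
  have hQw := aux_hQw (W₁ ξ) (W₂ ξ) p q (Bfn W₁ W₂ ξ) h0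
  have h1 := aux_h1 (W₁ ξ) (W₂ ξ) p q (Bfn W₁ W₂ ξ) hBval h0
  have h2 := aux_h2 (W₁ ξ) (W₂ ξ) (Bfn W₁ W₂ ξ) hBval
  have h3 := aux_h3 (W₁ ξ) (W₂ ξ) p q (Bfn W₁ W₂ ξ) hBval h0 hBr
  have h4 := aux_h4 (W₁ ξ) (W₂ ξ) p q (Bfn W₁ W₂ ξ) hBval h0 hBr
  have hKQ : K ξ = Matrix.vecMulVec ![1, W₁ ξ, W₂ ξ] (wvf (W₁ ξ) (W₂ ξ) p q (Bfn W₁ W₂ ξ)) := by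
    simp only [hK]
    rw [hQ, hQw]
    have hPx : P ξ = 1 - (Bfn W₁ W₂ ξ)⁻¹ •
        Matrix.vecMulVec ![1, W₁ ξ, W₂ ξ] (star ![1, W₁ ξ, W₂ ξ]) := by
      rw [hPfun]
    rw [hPx, mul_sub, sub_mul, mul_one, one_mul, Matrix.mul_smul, Matrix.smul_mul,
      vmv_mul, vmv_mul, h1, h2, zero_smul, smul_zero, sub_zero, smul_smul,
      inv_mul_cancel₀ h0, one_smul, sub_sub_cancel]
  refine ⟨?_, ?_⟩
  · rw [hKQ, vmv_ct, vmv_mul, h3, zero_smul, Matrix.trace_zero]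
  · rw [hKQ, vmv_ct, vmv_mul, Matrix.trace_smul, vmv_trace, smul_eq_mul,
      hwd1, hwd2, hAB ξ, h2]
    exact h4
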